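/- The order ≺ on the free monoid Φ* is a reduction order: it is a total well-founded order (a well-order), the empty word is its minimum, and for all words a, b, s_1, s_2 ∈ Φ*, if s_1 ≺ s_2 then a·s_1·b ≺ a·s_2·b. -/

import Mathlib

noncomputable section

/-- The alphabet `Φ = {t, a_0, …, a_3, Q_0, …, Q_6, P_0, …, P_3, R}`. -/
inductive Phi
  | t
  | a (k : Fin 4)
  | Q (i : Fin 7)
  | P (j : Fin 4)
  | R
deriving DecidableEq, Fintype

/-- `deg_t w`: the number of occurrences of the letter `t` in the word `w`. -/
def degT (w : List Phi) : ℕ := w.count Phi.t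

/-- The height of a word `w = X_0 t X_1 t ⋯ t X_n` (the `X_i` free from `t`):
`h(w) = Σ_{i=0}^n 2^i · deg(X_i)`. -/
def height (w : List Phi) : ℕ :=
  ((w.splitOn Phi.t).zipIdx.map (fun p => 2 ^ p.2 * p.1.length)).sum

/-- The degree-lexicographic order on words associated to a fixed total order on the letters. -/
def deglex [LinearOrder Phi] (w₁ w₂ : List Phi) : Prop :=
  w₁.length < w₂.length ∨ (w₁.length = w₂.length ∧ List.Lex (· < ·) w₁ w₂)

/-- The order `≺` of Proposition 2: first compare the number of occurrences of `t`, then the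
height, then use deglex. -/
def prec [LinearOrder Phi] (w₁ w₂ : List Phi) : Prop :=
  degT w₁ < degT w₂ ∨ (degT w₁ = degT w₂ ∧
    (height w₁ < height w₂ ∨ (height w₁ = height w₂ ∧ deglex w₁ w₂)))

def F (cs : List (List Phi)) : ℕ := cs.foldr (fun X s => X.length + 2 * s) 0

lemma sum_enumFrom (cs : List (List Phi)) (n : ℕ) :
    ((cs.zipIdx n).map (fun p => 2 ^ p.2 * p.1.length)).sum = 2 ^ n * F cs := by
  induction cs generalizing n with
  | nil => simp [F]
  | cons c cs ih => simp [F, List.zipIdx_cons, ih]; ring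

lemma height_eq_F (w : List Phi) : height w = F (w.splitOn Phi.t) := by
  simpa [height] using sum_enumFrom (w.splitOn Phi.t) 0

lemma splitOn_cons (x : Phi) (l : List Phi) :
    (x :: l).splitOn Phi.t =
      if x = Phi.t then [] :: l.splitOn Phi.t
      else (l.splitOn Phi.t).modifyHead (List.cons x) := by
  by_cases h : x = Phi.t <;> simp [List.splitOn, List.splitOnP_cons, h]

lemma height_nil : height ([] : List Phi) = 0 := by simp [height_eq_F, F]

lemma height_t_cons (l : List Phi) : height (Phi.t :: l) = 2 * height l := by
  simp [height_eq_F, splitOn_cons, F]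

lemma height_cons {x : Phi} (h : x ≠ Phi.t) (l : List Phi) :
    height (x :: l) = 1 + height l := by
  rw [height_eq_F, height_eq_F, splitOn_cons, if_neg h]
  obtain ⟨c, cs, hc⟩ := List.exists_cons_of_ne_nil
    (List.splitOnP_ne_nil (· == Phi.t) l : l.splitOn Phi.t ≠ [])
  rw [show l.splitOn Phi.t = c :: cs from hc]
  simp [F]; ring

lemma degT_nil : degT ([] : List Phi) = 0 := rfl

lemma degT_cons (x : Phi) (l : List Phi) :
    degT (x :: l) = (if x = Phi.t then 1 else 0) + degT l := by
  by_cases h : x = Phi.t <;> simp [degT, List.count_cons, h, Nat.add_comm]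

lemma degT_append (a b : List Phi) : degT (a ++ b) = degT a + degT b := by
  simp [degT, List.count_append]

lemma height_append (a b : List Phi) :
    height (a ++ b) = height a + 2 ^ degT a * height b := by
  induction a with
  | nil => simp [height_nil, degT_nil]
  | cons x a ih =>
    by_cases h : x = Phi.t
    · subst h
      rw [List.cons_append, height_t_cons, height_t_cons, ih, degT_cons]
      simp [pow_succ]; ring
    · rw [List.cons_append, height_cons h, height_cons h, ih, degT_cons, if_neg h]
      ring

lemma length_le (w : List Phi) : w.length ≤ degT w + height w := by
  induction w with
  | nil => simp [degT_nil, height_nil]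
  | cons x l ih =>
    by_cases h : x = Phi.t
    · subst h; rw [height_t_cons, degT_cons, if_pos rfl]; simp only [List.length_cons]; omega
    · rw [height_cons h, degT_cons, if_neg h]; simp only [List.length_cons]; omega

lemma lex_append_left {r : Phi → Phi → Prop} (u : List Phi) {x y : List Phi}
    (h : List.Lex r x y) : List.Lex r (u ++ x) (u ++ y) := by
  induction u with
  | nil => simpa using h
  | cons a u ih => exact List.Lex.cons ih

lemma lex_append_right {r : Phi → Phi → Prop} :
    ∀ {x y : List Phi}, List.Lex r x y → x.length = y.length →
      ∀ v : List Phi, List.Lex r (x ++ v) (y ++ v)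
  | _, _, List.Lex.nil, h, v => by simp at h
  | _, _, List.Lex.cons hl, h, v =>
      List.Lex.cons (lex_append_right hl (by simpa using h) v)
  | _, _, List.Lex.rel hab, h, v => List.Lex.rel hab


section
variable [LinearOrder Phi]


lemma prec_total (w₁ w₂ : List Phi) : prec w₁ w₂ ∨ w₁ = w₂ ∨ prec w₂ w₁ := by
  rcases lt_trichotomy (degT w₁) (degT w₂) with h | h | h
  · exact Or.inl (Or.inl h)
  · rcases lt_trichotomy (height w₁) (height w₂) with h' | h' | h'
    · exact Or.inl (Or.inr ⟨h, Or.inl h'⟩)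
    · rcases lt_trichotomy w₁.length w₂.length with h'' | h'' | h''
      · exact Or.inl (Or.inr ⟨h, Or.inr ⟨h', Or.inl h''⟩⟩)
      · rcases trichotomous_of (List.Lex ((· < ·) : Phi → Phi → Prop)) w₁ w₂ with hl | hl | hl
        · exact Or.inl (Or.inr ⟨h, Or.inr ⟨h', Or.inr ⟨h'', hl⟩⟩⟩)
        · exact Or.inr (Or.inl hl)
        · exact Or.inr (Or.inr (Or.inr ⟨h.symm, Or.inr ⟨h'.symm, Or.inr ⟨h''.symm, hl⟩⟩⟩))
      · exact Or.inr (Or.inr (Or.inr ⟨h.symm, Or.inr ⟨h'.symm, Or.inl h''⟩⟩))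
    · exact Or.inr (Or.inr (Or.inr ⟨h.symm, Or.inl h'⟩))
  · exact Or.inr (Or.inr (Or.inl h))

lemma deglex_trans {w₁ w₂ w₃ : List Phi} (h₁ : deglex w₁ w₂) (h₂ : deglex w₂ w₃) :
    deglex w₁ w₃ := by
  rcases h₁ with h₁ | ⟨e₁, l₁⟩ <;> rcases h₂ with h₂ | ⟨e₂, l₂⟩
  · exact Or.inl (h₁.trans h₂)
  · exact Or.inl (e₂ ▸ h₁)
  · exact Or.inl (e₁ ▸ h₂)
  · exact Or.inr ⟨e₁.trans e₂, lt_trans (α := List Phi) l₁ l₂⟩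

lemma prec_trans {w₁ w₂ w₃ : List Phi} (h₁ : prec w₁ w₂) (h₂ : prec w₂ w₃) :
    prec w₁ w₃ := by
  rcases h₁ with h₁ | ⟨e₁, h₁⟩ <;> rcases h₂ with h₂ | ⟨e₂, h₂⟩
  · exact Or.inl (h₁.trans h₂)
  · exact Or.inl (e₂ ▸ h₁)
  · exact Or.inl (e₁ ▸ h₂)
  · refine Or.inr ⟨e₁.trans e₂, ?_⟩
    rcases h₁ with h₁ | ⟨f₁, g₁⟩ <;> rcases h₂ with h₂ | ⟨f₂, g₂⟩
    · exact Or.inl (h₁.trans h₂)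
    · exact Or.inl (f₂ ▸ h₁)
    · exact Or.inl (f₁ ▸ h₂)
    · exact Or.inr ⟨f₁.trans f₂, deglex_trans g₁ g₂⟩

lemma prec_irrefl (w : List Phi) : ¬ prec w w := by
  rintro (h | ⟨-, h | ⟨-, h | ⟨-, h⟩⟩⟩)
  · omega
  · omega
  · omega
  · exact irrefl_of (List.Lex ((· < ·) : Phi → Phi → Prop)) w h

lemma prec_wf : WellFounded (prec : List Phi → List Phi → Prop) := by
  haveI : IsTrans (List Phi) prec := ⟨fun _ _ _ => prec_trans⟩
  haveI : IsIrrefl (List Phi) prec := ⟨prec_irrefl⟩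
  haveI : IsStrictOrder (List Phi) prec := {}
  have key : ∀ n : ℕ, ∀ w : List Phi, degT w = n → Acc prec w := by
    intro n
    induction n using Nat.strong_induction_on with
    | _ n IHn =>
      have key2 : ∀ k : ℕ, ∀ w : List Phi, degT w = n → height w = k → Acc prec w := by
        intro k
        induction k using Nat.strong_induction_on with
        | _ k IHk =>
          intro w hw hk
          set S : Set (List Phi) := {v | degT v = n ∧ height v = k} with hS
          have hfin : S.Finite := by
            apply (List.finite_length_le Phi (n + k)).subset
            rintro v ⟨hv1, hv2⟩
            have := length_le v
            simp only [Set.mem_setOf_eq]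
            omega
          have hwf : WellFounded (fun a b : S => prec a.1 b.1) := hfin.wellFoundedOn (r := prec)
          have : ∀ x : S, Acc prec x.1 := by
            intro x
            induction x using hwf.induction with
            | _ x IH =>
              obtain ⟨hx1, hx2⟩ := x.2
              refine Acc.intro _ (fun y hy => ?_)
              rcases hy with h | ⟨e, h | ⟨e', h⟩⟩
              · exact IHn (degT y) (by omega) y rfl
              · exact IHk (height y) (by omega) y (by omega) rfl
              · exact IH ⟨y, by omega, by omega⟩ (Or.inr ⟨e, Or.inr ⟨e', h⟩⟩)
          exact this ⟨w, hw, hk⟩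
      intro w hw
      exact key2 (height w) w hw rfl
  exact ⟨fun w => key (degT w) w rfl⟩

lemma prec_nil {w : List Phi} (hw : w ≠ []) : prec [] w := by
  rcases Nat.eq_zero_or_pos (degT w) with h | h
  · rcases Nat.eq_zero_or_pos (height w) with h' | h'
    · refine Or.inr ⟨by simp [degT_nil, h], Or.inr ⟨by simp [height_nil, h'], Or.inl ?_⟩⟩
      simpa using List.length_pos_iff.mpr hw
    · exact Or.inr ⟨by simp [degT_nil, h], Or.inl (by simpa [height_nil] using h')⟩
  · exact Or.inl (by simpa [degT_nil] using h)

lemma prec_compat (u v s₁ s₂ : List Phi) (h : prec s₁ s₂) :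
    prec (u ++ s₁ ++ v) (u ++ s₂ ++ v) := by
  have hd : ∀ s : List Phi, degT (u ++ s ++ v) = degT u + degT s + degT v := by
    intro s; rw [degT_append, degT_append]
  have hh : ∀ s : List Phi,
      height (u ++ s ++ v) = height u + 2 ^ degT u * height s
        + 2 ^ (degT u + degT s) * height v := by
    intro s
    rw [List.append_assoc, height_append, height_append, pow_add]
    ring
  have hl : ∀ s : List Phi, (u ++ s ++ v).length = u.length + s.length + v.length := by
    intro s; simp [List.length_append]; omega
  rcases h with h | ⟨e, h | ⟨e', h⟩⟩
  · exact Or.inl (by rw [hd, hd]; omega)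
  · refine Or.inr ⟨by rw [hd, hd]; omega, Or.inl ?_⟩
    rw [hh, hh, e]
    have : 2 ^ degT u * height s₁ < 2 ^ degT u * height s₂ :=
      mul_lt_mul_of_pos_left h (by positivity)
    omega
  · refine Or.inr ⟨by rw [hd, hd]; omega, Or.inr ⟨by rw [hh, hh, e, e'], ?_⟩⟩
    rcases h with h | ⟨e'', h⟩
    · exact Or.inl (by rw [hl, hl]; omega)
    · refine Or.inr ⟨by rw [hl, hl]; omega, ?_⟩
      simpa [List.append_assoc] using lex_append_left u (lex_append_right h e'' v)


end

/-- The order `≺` on the free monoid `Φ*` is a reduction order: it is a total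
well-founded order (a well-order), the empty word is its minimum, and it is compatible with
multiplication on both sides. -/
theorem prec_is_reduction_order [LinearOrder Phi] :
    (∀ w₁ w₂ : List Phi, prec w₁ w₂ ∨ w₁ = w₂ ∨ prec w₂ w₁) ∧
    (∀ w₁ w₂ w₃ : List Phi, prec w₁ w₂ → prec w₂ w₃ → prec w₁ w₃) ∧
    (∀ w : List Phi, ¬ prec w w) ∧
    WellFounded (prec : List Phi → List Phi → Prop) ∧
    (∀ w : List Phi, w ≠ [] → prec [] w) ∧
    (∀ u v s₁ s₂ : List Phi, prec s₁ s₂ → prec (u ++ s₁ ++ v) (u ++ s₂ ++ v)) := by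
  exact ⟨prec_total, fun _ _ _ => prec_trans, prec_irrefl, prec_wf,
    fun _ hw => prec_nil hw, prec_compat⟩
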